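/- Let A ∈ ℝ^{m×n}, ȳ ∈ ℝ^m with ȳ > 0 componentwise, 𝟏ᵀ ȳ = 1, and Aᵀ ȳ = 0. Let Ȳ = Diag(ȳ) and let σ⁺min denote the smallest positive singular value of Aᵀ Ȳ. Then every v ∈ Aᵀ(ℝ^m) with ‖v‖₂ ≤ σ⁺min/2 belongs to the set {Aᵀ y : y ∈ ℝ^m₊, 𝟏ᵀ y ≤ 1}. -/

import Mathlib

noncomputable def e2norm {k : ℕ} (v : Fin k → ℝ) : ℝ := Real.sqrt (∑ i, v i ^ 2)

noncomputable def sigmaMinPos {p q : ℕ} (M : Matrix (Fin p) (Fin q) ℝ) : ℝ :=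
  sInf {r | ∃ v : Fin q → ℝ, (∃ w, M.transpose.mulVec w = v) ∧ e2norm v = 1 ∧
    r = e2norm (M.mulVec v)}

lemma e2norm_eq {k : ℕ} (v : EuclideanSpace ℝ (Fin k)) : e2norm v = ‖v‖ := by
  rw [EuclideanSpace.norm_eq, e2norm]
  simp [Real.norm_eq_abs, sq_abs]

lemma e2norm_nonneg {k : ℕ} (v : Fin k → ℝ) : 0 ≤ e2norm v := Real.sqrt_nonneg _

lemma e2norm_smul {k : ℕ} (c : ℝ) (v : Fin k → ℝ) : e2norm (c • v) = |c| * e2norm v := by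
  have h1 := e2norm_eq (c • (WithLp.toLp 2 v : EuclideanSpace ℝ (Fin k)))
  have h2 := e2norm_eq (WithLp.toLp 2 v : EuclideanSpace ℝ (Fin k))
  rw [norm_smul, Real.norm_eq_abs, ← h2] at h1
  exact h1

lemma e2norm_eq_zero {k : ℕ} (v : Fin k → ℝ) : e2norm v = 0 ↔ v = 0 := by
  rw [e2norm_eq (WithLp.toLp 2 v : EuclideanSpace ℝ (Fin k)), norm_eq_zero]
  exact WithLp.toLp_eq_zero 2

lemma abs_le_e2norm {k : ℕ} (v : Fin k → ℝ) (i : Fin k) : |v i| ≤ e2norm v := by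
  rw [e2norm, ← Real.sqrt_sq_eq_abs]
  apply Real.sqrt_le_sqrt
  exact Finset.single_le_sum (f := fun j => v j ^ 2) (fun j _ => sq_nonneg _) (Finset.mem_univ i)

lemma sigma_mul_le {p q : ℕ} (M : Matrix (Fin p) (Fin q) ℝ) (u : Fin q → ℝ)
    (hu : ∃ w, M.transpose.mulVec w = u) :
    sigmaMinPos M * e2norm u ≤ e2norm (M.mulVec u) := by
  by_cases h : u = 0
  · subst h; simp [Matrix.mulVec_zero, e2norm, e2norm_nonneg]
  · have hn : 0 < e2norm u :=
      lt_of_le_of_ne (e2norm_nonneg u) (fun h' => h ((e2norm_eq_zero u).mp h'.symm))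
    set c := (e2norm u)⁻¹ with hc
    have hcpos : 0 < c := inv_pos.mpr hn
    have hmem : sigmaMinPos M ≤ e2norm (M.mulVec (c • u)) := by
      apply csInf_le
      · exact ⟨0, fun r ⟨v, _, _, hr⟩ => hr ▸ e2norm_nonneg _⟩
      · refine ⟨c • u, ?_, ?_, rfl⟩
        · obtain ⟨w, hw⟩ := hu
          exact ⟨c • w, by rw [Matrix.mulVec_smul, hw]⟩
        · rw [e2norm_smul, abs_of_pos hcpos, hc, inv_mul_cancel₀ (ne_of_gt hn)]
    rw [Matrix.mulVec_smul, e2norm_smul, abs_of_pos hcpos, hc, inv_mul_eq_div,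
      le_div_iff₀ hn] at hmem
    exact hmem

theorem stmt8 {m n : ℕ} (A : Matrix (Fin m) (Fin n) ℝ)
    (ybar : Fin m → ℝ) (hpos : ∀ i, 0 < ybar i) (hsum : ∑ i, ybar i = 1)
    (hker : A.transpose.mulVec ybar = 0) :
    ∀ v : Fin n → ℝ, (∃ w, A.transpose.mulVec w = v) →
      e2norm v ≤ sigmaMinPos (A.transpose * Matrix.diagonal ybar) / 2 →
      ∃ y : Fin m → ℝ, (∀ i, 0 ≤ y i) ∧ (∑ i, y i) ≤ 1 ∧
        A.transpose.mulVec y = v := by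
  intro v hv hle
  by_cases hv0 : v = 0
  · exact ⟨0, fun i => le_refl 0, by simp, by simp [hv0, Matrix.mulVec_zero]⟩
  set M := A.transpose * Matrix.diagonal ybar with hM
  have hvpos : 0 < e2norm v :=
    lt_of_le_of_ne (e2norm_nonneg v) (fun h => hv0 ((e2norm_eq_zero v).mp h.symm))
  have hσ : 0 < sigmaMinPos M := by
    rw [hM] at *; linarith
  -- v is in the range of M
  obtain ⟨w, hw⟩ := hv
  set w' : Fin m → ℝ := fun i => (ybar i)⁻¹ * w i with hw'
  have hd : (Matrix.diagonal ybar).mulVec w' = w := by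
    ext i
    rw [Matrix.mulVec_diagonal, hw']
    field_simp
    rw [mul_comm]
    exact mul_div_cancel_right₀ (w i) (hpos i).ne'
  have hvM : M.mulVec w' = v := by
    rw [hM, ← Matrix.mulVec_mulVec, hd, hw]
  -- the row space of M as a submodule of Euclidean space
  let K : Submodule ℝ (EuclideanSpace ℝ (Fin m)) :=
    { carrier := {u | ∃ c, M.transpose.mulVec c = u}
      add_mem' := fun {x y} hx hy => by
        obtain ⟨c1, h1⟩ := hx; obtain ⟨c2, h2⟩ := hy
        exact ⟨c1 + c2, by rw [Matrix.mulVec_add, h1, h2]; rfl⟩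
      zero_mem' := ⟨0, Matrix.mulVec_zero _⟩
      smul_mem' := fun r x hx => by
        obtain ⟨c, hc⟩ := hx
        exact ⟨r • c, by rw [Matrix.mulVec_smul, hc]; rfl⟩ }
  obtain ⟨a, ha, b, hb, hab⟩ := K.exists_add_mem_mem_orthogonal (WithLp.toLp 2 w' : EuclideanSpace ℝ (Fin m))
  -- b is in the kernel of M
  have hMb : M.mulVec b = 0 := by
    have key : ∀ c : Fin n → ℝ, dotProduct (M.transpose.mulVec c) b = 0 := by
      intro c
      have hmem : (WithLp.toLp 2 (M.transpose.mulVec c) : EuclideanSpace ℝ (Fin m)) ∈ K := ⟨c, rfl⟩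
      have := (Submodule.mem_orthogonal K b).mp hb _ hmem
      simpa [PiLp.inner_apply, RCLike.inner_apply, dotProduct, mul_comm] using this
    have h2 := key (M.mulVec b)
    rw [dotProduct_comm, Matrix.dotProduct_mulVec, Matrix.vecMul_transpose,
      dotProduct_self_eq_zero] at h2
    exact h2
  have hMa : M.mulVec a = v := by
    have : M.mulVec w' = M.mulVec a + M.mulVec b := by
      rw [← Matrix.mulVec_add]; exact congrArg _ (congrArg WithLp.ofLp hab)
    rw [hvM, hMb, add_zero] at this
    exact this.symm
  -- the norm bound on a
  have hbound : sigmaMinPos M * e2norm a ≤ e2norm v := by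
    have := sigma_mul_le M a ha
    rwa [hMa] at this
  have hahalf : e2norm a ≤ 1 / 2 := by
    have h1 : sigmaMinPos M * e2norm a ≤ sigmaMinPos M / 2 := le_trans hbound hle
    nlinarith [e2norm_nonneg (k := m) a]
  have habs : ∀ i, |a i| ≤ 1 / 2 := fun i => le_trans (abs_le_e2norm a i) hahalf
  -- construct y
  refine ⟨fun i => ybar i * (1 / 2 + a i), ?_, ?_, ?_⟩
  · intro i
    have : -(1/2 : ℝ) ≤ a i := neg_le_of_abs_le (habs i)
    have := (hpos i).le
    nlinarith
  · calc ∑ i, ybar i * (1 / 2 + a i) ≤ ∑ i, ybar i * 1 := by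
          apply Finset.sum_le_sum
          intro i _
          have h1 : a i ≤ 1/2 := le_of_abs_le (habs i)
          have h2 := (hpos i).le
          nlinarith
      _ = 1 := by simp [hsum]
  · have hy : (fun i => ybar i * (1 / 2 + a i)) =
        (1/2 : ℝ) • ybar + (Matrix.diagonal ybar).mulVec a := by
      ext i
      simp [Matrix.mulVec_diagonal]
      ring
    rw [hy, Matrix.mulVec_add, Matrix.mulVec_smul, hker, Matrix.mulVec_mulVec, ← hM, hMa]
    rw [smul_zero, zero_add]
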